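/- Let c̄ be the smallest symbol of Σ and let w be a word with w[0] = w[1] = c̄ and w[|w|-1] ≠ c̄. Let r be the smallest position of w with w[r] ≠ c̄ (so w[0..r-1] = c̄^r), and let 𝒫 = { c̄^r c : c ∈ Σ, c ≤ w[r] }. Then b₁ = min( { s ∈ Occ_𝒫(w) : suf(w,s) < w } ∪ { |w| } ) - 1, where b₁ = |w₁| - 1 is the ending position in w of the first factor w₁ of CFL(w). -/

import Mathlib

variable {α : Type*}

/-- The rotation `rot(w,i) = w[i..|w|-1] w[0..i-1]`. -/
def rot (w : List α) (i : ℕ) : List α := w.drop i ++ w.take i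

/-- A Lyndon word: a nonempty word strictly smaller than all of its proper rotations. -/
def IsLyndon [LinearOrder α] (w : List α) : Prop :=
  w ≠ [] ∧ ∀ i, 0 < i → i < w.length → w < rot w i

/-- `IsCFL w f` : `f` is the Chen–Fox–Lyndon factorization of `w`, i.e. a
nonincreasing sequence of Lyndon words whose concatenation is `w`. -/
def IsCFL [LinearOrder α] (w : List α) (f : List (List α)) : Prop :=
  f.flatten = w ∧ (∀ x ∈ f, IsLyndon x) ∧ f.Chain' (· ≥ ·)

/-- `u^k` : the `k`-fold concatenation of the word `u`. -/
def listPow (u : List α) (k : ℕ) : List α := (List.replicate k u).flatten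

/-- `P`: the set of nonempty prefixes of Lyndon words. -/
def InP [LinearOrder α] (w : List α) : Prop :=
  w ≠ [] ∧ ∃ u : List α, IsLyndon (w ++ u)

/-- `P' = P ∪ { c^k : k ≥ 2 }` where `c` is the maximum symbol of the alphabet. -/
def InP' [LinearOrder α] (w : List α) : Prop :=
  InP w ∨ ∃ (c : α) (k : ℕ), 2 ≤ k ∧ (∀ a : α, a ≤ c) ∧ w = List.replicate k c

/-- A border of `w`: a proper prefix of `w` that is also a suffix of `w`. -/
def IsBorder (b w : List α) : Prop := b <+: w ∧ b <:+ w ∧ b.length < w.length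

/-- The length of the longest common prefix of two words. -/
def lcpLen [DecidableEq α] : List α → List α → ℕ
  | a :: u, b :: v => if a = b then lcpLen u v + 1 else 0
  | _, _ => 0



section Aux

variable [LinearOrder α]

/-- strict "symbol difference" comparison: `x` and `y` differ at a position
where `x` has the smaller symbol. -/
private def DLT (x y : List α) : Prop :=
  ∃ p, ∃ (hx : p < x.length) (hy : p < y.length),
    x.take p = y.take p ∧ x[p] < y[p]

omit [LinearOrder α] in
private theorem take_eq_mono {x y : List α} {q : ℕ} (h : x.take q = y.take q) {p : ℕ}
    (hpq : p ≤ q) : x.take p = y.take p := by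
  have := congrArg (List.take p) h
  simpa [List.take_take, Nat.min_eq_left hpq] using this

omit [LinearOrder α] in
private theorem getElem_eq_of_take_eq {x y : List α} {n i : ℕ} (hT : x.take n = y.take n)
    (hi : i < n) (hx : i < x.length) (hy : i < y.length) : x[i] = y[i] := by
  have h1 : i < (x.take n).length := by simp; omega
  calc x[i] = (x.take n)[i] := List.getElem_take.symm
    _ = (y.take n)[i]'(hT ▸ h1) := List.getElem_of_eq hT h1
    _ = y[i] := List.getElem_take

private theorem dlt_lt_append {x y : List α} (h : DLT x y) (u v : List α) :
    x ++ u < y ++ v := by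
  obtain ⟨p, hx, hy, hTake, hLt⟩ := h
  induction x generalizing y p with
  | nil => simp at hx
  | cons a x ih =>
    cases y with
    | nil => simp at hy
    | cons b y =>
      cases p with
      | zero => exact List.Lex.rel (by simpa using hLt)
      | succ p =>
        simp only [List.take_succ_cons, List.cons.injEq] at hTake
        obtain ⟨rfl, hTake⟩ := hTake
        exact List.Lex.cons (ih p (by simpa using hx) (by simpa using hy) hTake
          (by simpa using hLt))

private theorem lt_of_dlt {x y : List α} (h : DLT x y) : x < y := by
  simpa using dlt_lt_append h [] []

private theorem dlt_of_lt_not_prefix {x y : List α} (h : x < y) (hnp : ¬ x <+: y) : DLT x y := by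
  induction x generalizing y with
  | nil => exact absurd (List.nil_prefix) hnp
  | cons a x ih =>
    cases y with
    | nil => exact (List.not_lt_nil _ h).elim
    | cons b y =>
      rcases (h : List.Lex (· < ·) (a :: x) (b :: y)) with _ | h' | h'
      swap
      · have hnp' : ¬ x <+: y := fun hp => hnp (List.cons_prefix_cons.2 ⟨rfl, hp⟩)
        obtain ⟨p, hx, hy, hTake, hLt⟩ := ih h' hnp'
        exact ⟨p + 1, by simpa using hx, by simpa using hy, by simpa using hTake,
          by simpa using hLt⟩
      · exact ⟨0, by simp, by simp, by simp, by simpa using h'⟩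

private theorem lt_of_prefix_ne {x y : List α} (h : x <+: y) (hne : x ≠ y) : x < y := by
  obtain ⟨t, rfl⟩ := h
  have ht : t ≠ [] := by rintro rfl; simp at hne
  clear hne
  induction x with
  | nil =>
    cases t with
    | nil => simp at ht
    | cons a t => exact List.Lex.nil
  | cons a x ih => exact List.Lex.cons ih

private theorem nil_lt_of_ne {t : List α} (h : t ≠ []) : ([] : List α) < t :=
  lt_of_prefix_ne (List.nil_prefix) (Ne.symm h)

private theorem append_lt_append_left_iff {x y : List α} (s : List α) :
    s ++ x < s ++ y ↔ x < y := by
  constructor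
  · intro h
    induction s with
    | nil => exact h
    | cons a s ih => exact ih (((List.cons_lex_cons_iff.1 (h : List.Lex (· < ·) (a :: (s ++ x)) (a :: (s ++ y)))).resolve_left (lt_irrefl a)).2)
  · exact fun h => List.Lex.append_left _ h s

private theorem dlt_trans {a b c : List α} (h1 : DLT a b) (h2 : DLT b c) : DLT a c := by
  obtain ⟨p, hpa, hpb, ht1, hl1⟩ := h1
  obtain ⟨q, hqb, hqc, ht2, hl2⟩ := h2
  rcases lt_trichotomy p q with hpq | rfl | hqp
  · refine ⟨p, hpa, by omega, ?_, ?_⟩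
    · rw [ht1, take_eq_mono ht2 hpq.le]
    · exact hl1.trans_le (le_of_eq (getElem_eq_of_take_eq ht2 hpq hpb (by omega)))
  · exact ⟨p, hpa, hqc, by rw [ht1, ht2], lt_trans hl1 hl2⟩
  · refine ⟨q, by omega, hqc, ?_, ?_⟩
    · rw [take_eq_mono ht1 hqp.le, ht2]
    · rw [getElem_eq_of_take_eq ht1 hqp (by omega) hqb]; exact hl2

private theorem lt_cases {x y : List α} (h : x < y) : (x <+: y ∧ x ≠ y) ∨ DLT x y := by
  by_cases hp : x <+: y
  · exact Or.inl ⟨hp, fun he => absurd h (he ▸ lt_irrefl _)⟩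
  · exact Or.inr (dlt_of_lt_not_prefix h hp)

omit [LinearOrder α] in
private theorem prefix_take_eq {z x : List α} (h : z <+: x) {p : ℕ} (hp : p ≤ z.length) :
    z.take p = x.take p := by
  obtain ⟨t0, rfl⟩ := h
  rw [List.take_append_of_le_length hp]

private theorem lyndon_not_drop_prefix {x : List α} (hx : IsLyndon x) {i : ℕ}
    (h1 : 0 < i) (h2 : i < x.length) : ¬ x.drop i <+: x := by
  intro hpre
  set v := x.drop i with hv
  set j := x.length - i with hj
  have hvlen : v.length = j := by simp [hv, hj]
  have hvt : v = x.take j := by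
    have := List.prefix_iff_eq_take.1 hpre
    rwa [hvlen] at this
  set z := x.drop j with hzdef
  have hxvz : x = v ++ z := by rw [hvt, hzdef, List.take_append_drop]
  have hroti : x < v ++ x.take i := hx.2 i h1 h2
  have hzlt : z < x.take i := by
    refine (append_lt_append_left_iff v).1 ?_
    rw [← hxvz]
    exact hroti
  have hzlen : z.length = (x.take i).length := by
    simp [hzdef, hj]; omega
  have hdlt : DLT z (x.take i) := by
    rcases lt_cases hzlt with ⟨hp, hne⟩ | hd
    · exact absurd (List.IsPrefix.eq_of_length hp hzlen) hne
    · exact hd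
  have hrotj : x < z ++ v := by
    have := hx.2 j (by omega) (by omega)
    rwa [show rot x j = z ++ v by rw [hvt]; rfl] at this
  have hx2 : x = x.take i ++ v := by rw [hv, List.take_append_drop]
  rw [hx2] at hrotj
  exact absurd (dlt_lt_append hdlt v v) (lt_asymm hrotj)

private theorem lyndon_dlt_drop {x : List α} (hx : IsLyndon x) {i : ℕ}
    (h1 : 0 < i) (h2 : i < x.length) : DLT x (x.drop i) := by
  have hrot : x < x.drop i ++ x.take i := hx.2 i h1 h2
  rcases lt_cases hrot with ⟨hp, hne⟩ | hd
  · refine absurd (List.IsPrefix.eq_of_length hp ?_) hne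
    simp; omega
  · obtain ⟨p, hpx, hpy, hT, hL⟩ := hd
    by_cases hpd : p < (x.drop i).length
    · refine ⟨p, hpx, hpd, ?_, ?_⟩
      · rw [hT, List.take_append_of_le_length (by omega)]
      · exact hL.trans_eq (List.getElem_append_left hpd)
    · exfalso
      apply lyndon_not_drop_prefix hx h1 h2
      have hdx : x.drop i = (x.drop i ++ x.take i).take (x.drop i).length := by
        rw [List.take_append_of_le_length le_rfl, List.take_length]
      rw [hdx, ← take_eq_mono hT (by omega)]
      exact List.take_prefix _ _

private theorem replicate_not_lyndon {c : α} {k : ℕ} (hk : 2 ≤ k) :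
    ¬ IsLyndon (List.replicate k c) := by
  intro h
  have := h.2 1 one_pos (by simp; omega)
  rw [show rot (List.replicate k c) 1 = List.replicate k c by
    simp [rot, List.drop_replicate, List.take_replicate, ← List.replicate_add]
    omega] at this
  exact lt_irrefl _ this

/-- Lemma S : a concatenation of Lyndon words each `≤ x` is smaller than `t ++ v`
whenever `x` and `t` differ at a position where `x` is smaller. -/
private theorem lemS (x : List α) (hx : IsLyndon x) :
    ∀ n (f : List (List α)), f.flatten.length ≤ n →
    (∀ y ∈ f, IsLyndon y ∧ y ≤ x) →
    ∀ t v : List α, DLT x t → f.flatten < t ++ v := by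
  intro n
  induction n with
  | zero =>
    intro f hlen hfac t v hdlt
    obtain ⟨p, _, hpt, _, _⟩ := hdlt
    have hf : f.flatten = [] := List.eq_nil_of_length_eq_zero (by omega)
    rw [hf]
    refine nil_lt_of_ne fun he => ?_
    rw [List.append_eq_nil_iff] at he
    simp [he.1] at hpt
  | succ n ih =>
    intro f hlen hfac t v hdlt
    match f with
    | [] =>
      obtain ⟨p, _, hpt, _, _⟩ := hdlt
      refine nil_lt_of_ne fun he => ?_
      rw [List.append_eq_nil_iff] at he
      simp [he.1] at hpt
    | z :: g =>
      obtain ⟨hzl, hzle⟩ := hfac z (List.mem_cons_self)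
      have hzne : z ≠ [] := hzl.1
      have hzpos : 0 < z.length := List.length_pos_iff.2 hzne
      obtain ⟨p, hpx, hpt, hTxt, hLxt⟩ := hdlt
      have hfacg : ∀ y ∈ g, IsLyndon y ∧ y ≤ x := fun y hy => hfac y (List.mem_cons_of_mem _ hy)
      have hcase : z <+: x ∨ DLT z x := by
        rcases hzle.lt_or_eq with hlt | rfl
        · rcases lt_cases hlt with ⟨hp, _⟩ | hd
          exacts [Or.inl hp, Or.inr hd]
        · exact Or.inl (List.prefix_refl _)
      rcases hcase with hzpre | hzdlt
      · by_cases hzp : p < z.length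
        · have hdzt : DLT z t :=
            ⟨p, hzp, hpt, (prefix_take_eq hzpre hzp.le).trans hTxt,
              (hzpre.getElem hzp).symm ▸ hLxt⟩
          rw [List.flatten_cons]
          exact dlt_lt_append hdzt _ _
        · push_neg at hzp
          have hzx : z = x.take z.length := List.prefix_iff_eq_take.1 hzpre
          have hzt : z = t.take z.length := by
            have h2 : x.take z.length = t.take z.length := take_eq_mono hTxt hzp
            rw [← h2, ← hzx]
          have htsplit : t = z ++ t.drop z.length := by
            conv_lhs => rw [← List.take_append_drop z.length t, ← hzt]
          have hzltx : z.length < x.length := by omega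
          have hdx : DLT x (x.drop z.length) := lyndon_dlt_drop hx hzpos hzltx
          have hd2 : DLT (x.drop z.length) (t.drop z.length) := by
            refine ⟨p - z.length, by simp; omega, by simp; omega, ?_, ?_⟩
            · have := congrArg (List.drop z.length) hTxt
              rwa [List.drop_take, List.drop_take] at this
            · have hidx : z.length + (p - z.length) = p := by omega
              have e1 : (x.drop z.length)[p - z.length]'(by simp; omega) = x[p] := by
                rw [List.getElem_drop]
                congr 1
              have e2 : (t.drop z.length)[p - z.length]'(by simp; omega) = t[p] := by
                rw [List.getElem_drop]
                congr 1
              rw [e1, e2]; exact hLxt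
          have hdxt2 : DLT x (t.drop z.length) := dlt_trans hdx hd2
          have hglen : g.flatten.length ≤ n := by
            have : (z :: g).flatten.length = z.length + g.flatten.length := by simp
            omega
          have := ih g hglen hfacg (t.drop z.length) v hdxt2
          rw [List.flatten_cons, htsplit, List.append_assoc]
          exact (append_lt_append_left_iff z).2 this
      · rw [List.flatten_cons]
        exact dlt_lt_append (dlt_trans hzdlt ⟨p, hpx, hpt, hTxt, hLxt⟩) _ _

/-- Lemma L : a nonempty concatenation of Lyndon words each `≤ x`
is smaller than `x ++` itself. -/
private theorem lemL (x : List α) (hx : IsLyndon x) :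
    ∀ n (f : List (List α)), f.flatten.length ≤ n →
    (∀ y ∈ f, IsLyndon y ∧ y ≤ x) →
    f.flatten ≠ [] → f.flatten < x ++ f.flatten := by
  intro n
  induction n with
  | zero =>
    intro f hlen hfac hne
    exact absurd (List.eq_nil_of_length_eq_zero (by omega)) hne
  | succ n ih =>
    intro f hlen hfac hne
    match f with
    | [] => simp at hne
    | z :: g =>
      obtain ⟨hzl, hzle⟩ := hfac z (List.mem_cons_self)
      have hzne : z ≠ [] := hzl.1
      have hzpos : 0 < z.length := List.length_pos_iff.2 hzne
      have hfacg : ∀ y ∈ g, IsLyndon y ∧ y ≤ x := fun y hy => hfac y (List.mem_cons_of_mem _ hy)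
      have hcase : z <+: x ∨ DLT z x := by
        rcases hzle.lt_or_eq with hlt | rfl
        · rcases lt_cases hlt with ⟨hp, _⟩ | hd
          exacts [Or.inl hp, Or.inr hd]
        · exact Or.inl (List.prefix_refl _)
      rcases hcase with hzpre | hzdlt
      · by_cases hzx : z = x
        · subst hzx
          rw [List.flatten_cons]
          refine (append_lt_append_left_iff z).2 ?_
          by_cases hg : g.flatten = []
          · rw [hg]
            exact nil_lt_of_ne (by simp [hzne])
          · have hglen : g.flatten.length ≤ n := by
              have : (z :: g).flatten.length = z.length + g.flatten.length := by simp
              omega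
            exact ih g hglen hfacg hg
        · have hzltx : z.length < x.length :=
            lt_of_le_of_ne hzpre.length_le (fun he => hzx (hzpre.eq_of_length he))
          have hxsplit : x = z ++ x.drop z.length := by
            conv_lhs => rw [← List.take_append_drop z.length x,
              ← List.prefix_iff_eq_take.1 hzpre]
          have hdx : DLT x (x.drop z.length) := lyndon_dlt_drop hx hzpos hzltx
          have := lemS x hx g.flatten.length g le_rfl hfacg (x.drop z.length)
            ((z :: g).flatten) hdx
          rw [List.flatten_cons]
          conv_rhs => rw [hxsplit]
          rw [List.append_assoc]
          exact (append_lt_append_left_iff z).2 this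
      · rw [List.flatten_cons]
        exact dlt_lt_append hzdlt _ _

private theorem eq_single_of_le_bot {cbar : α} (hbot : ∀ a : α, cbar ≤ a) {y : List α}
    (hy : y ≠ []) (hle : y ≤ [cbar]) : y = [cbar] := by
  rcases hle.lt_or_eq with hlt | rfl
  · rcases lt_cases hlt with ⟨hp, hne⟩ | hd
    · refine hp.eq_of_length ?_
      have h1 := hp.length_le
      have h2 : 0 < y.length := List.length_pos_iff.2 hy
      simp at h1 ⊢
      omega
    · obtain ⟨p, hpy, hpc, _, hL⟩ := hd
      have hp0 : p = 0 := by simpa using hpc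
      subst hp0
      exact absurd hL (not_lt.2 (by simpa using hbot (y[0])))
  · rfl

private theorem flatten_eq_replicate_of_bot {cbar : α} (hbot : ∀ a : α, cbar ≤ a)
    (f : List (List α)) (h : ∀ y ∈ f, y ≠ [] ∧ y ≤ [cbar]) :
    f.flatten = List.replicate f.length cbar := by
  induction f with
  | nil => rfl
  | cons z g ih =>
    have hz := h z (List.mem_cons_self)
    have hzc : z = [cbar] := eq_single_of_le_bot hbot hz.1 hz.2
    rw [List.flatten_cons, hzc, ih (fun y hy => h y (List.mem_cons_of_mem _ hy))]
    simp [List.replicate_succ]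

end Aux

/-- For `w` with `w[0] = w[1] = c̄`, `w[|w|-1] ≠ c̄`, `r` the smallest position with
`w[r] ≠ c̄` and `𝒫 = { c̄^r c : c ≤ w[r] }`:
`b₁ = min({s ∈ Occ_𝒫(w) : suf(w,s) < w} ∪ {|w|}) - 1`, where `b₁ = |w₁| - 1` is the
ending position of the first factor of `CFL(w)`. -/
theorem cfl_first_factor_occ [LinearOrder α] (cbar : α) (hcbar : ∀ a : α, cbar ≤ a)
    (w : List α) (hw : w ≠ [])
    (h01 : w.take 2 = [cbar, cbar]) (hlast : w.getLast hw ≠ cbar)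
    (r : ℕ) (hr : r < w.length)
    (hrne : w.getD r cbar ≠ cbar) (hrmin : ∀ t, t < r → w.getD t cbar = cbar)
    (w₁ : List α) (f' : List (List α)) (hf : IsCFL w (w₁ :: f')) :
    w₁.length - 1 =
      sInf ({s : ℕ | (∃ c : α, c ≤ w.getD r cbar ∧
          (List.replicate r cbar ++ [c]) <+: w.drop s) ∧ w.drop s < w} ∪
        {w.length}) - 1 := by
  classical
  obtain ⟨hflat, hlyn, hchain⟩ := hf
  have hw1lyn : IsLyndon w₁ := hlyn w₁ (List.mem_cons_self)
  have hw1ne : w₁ ≠ [] := hw1lyn.1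
  have hw_eq : w = w₁ ++ f'.flatten := by rw [← hflat, List.flatten_cons]
  have hpair : List.Pairwise (· ≥ ·) (w₁ :: f') := (List.isChain_iff_pairwise).1 hchain
  have hle_w1 : ∀ y ∈ f', y ≤ w₁ := fun y hy => (List.pairwise_cons.1 hpair).1 y hy
  have hw1pre : w₁ <+: w := ⟨f'.flatten, hw_eq.symm⟩
  have hw1len_le : w₁.length ≤ w.length := by rw [hw_eq]; simp
  have hdg : w.getD r cbar = w[r]'hr := List.getD_eq_getElem w cbar hr
  have htakew : w.take r = List.replicate r cbar := by
    apply List.ext_getElem (by simp; omega)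
    intro i h1 h2
    simp only [List.getElem_take, List.getElem_replicate]
    have hir : i < r := by simpa using h2
    rw [← List.getD_eq_getElem w cbar (by omega)]
    exact hrmin i hir
  -- `r < w₁.length`
  have hrw1 : r < w₁.length := by
    by_contra hcon
    push_neg at hcon
    have hallc : ∀ b ∈ w₁, b = cbar := by
      intro b hb
      obtain ⟨i, hi, rfl⟩ := List.mem_iff_getElem.1 hb
      have hiw : i < w.length := by omega
      rw [hw1pre.getElem hi, ← List.getD_eq_getElem w cbar hiw]
      exact hrmin i (by omega)
    have hrep : w₁ = List.replicate w₁.length cbar := List.eq_replicate_of_mem hallc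
    have hlen1 : w₁.length = 1 := by
      rcases Nat.lt_or_ge w₁.length 2 with h2 | h2
      · have := List.length_pos_iff.2 hw1ne; omega
      · exact absurd (hrep ▸ hw1lyn) (replicate_not_lyndon h2)
    have hw1c : w₁ = [cbar] := by rw [hrep, hlen1]; rfl
    have hbotall : ∀ y ∈ (w₁ :: f'), y ≠ [] ∧ y ≤ [cbar] := by
      intro y hy
      refine ⟨(hlyn y hy).1, ?_⟩
      rcases List.mem_cons.1 hy with rfl | hy'
      · rw [hw1c]
      · exact (hle_w1 y hy').trans (le_of_eq hw1c)
    have hrep2 : w = List.replicate (w₁ :: f').length cbar := by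
      rw [← hflat]; exact flatten_eq_replicate_of_bot hcbar _ hbotall
    have hbw : ∀ b ∈ w, b = cbar := fun b hb =>
      List.eq_of_mem_replicate (by rw [← hrep2]; exact hb)
    exact hlast (hbw _ (List.getLast_mem hw))
  have htakew1 : w₁.take r = List.replicate r cbar := by
    rw [prefix_take_eq hw1pre (le_of_lt hrw1), htakew]
  have hw1r : w₁[r]'hrw1 = w.getD r cbar := by rw [hdg]; exact hw1pre.getElem hrw1
  suffices hinf : sInf ({s : ℕ | (∃ c : α, c ≤ w.getD r cbar ∧
      (List.replicate r cbar ++ [c]) <+: w.drop s) ∧ w.drop s < w} ∪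
      {w.length}) = w₁.length by rw [hinf]
  apply le_antisymm
  · -- upper bound : membership
    by_cases hu : f'.flatten = []
    · have hlw : w.length = w₁.length := by rw [hw_eq, hu]; simp
      exact hlw ▸ Nat.sInf_le (Or.inr rfl)
    · apply Nat.sInf_le
      left
      have hdrop : w.drop w₁.length = f'.flatten := by rw [hw_eq, List.drop_left]
      have hlt : f'.flatten < w := by
        have := lemL w₁ hw1lyn f'.flatten.length f' le_rfl
          (fun y hy => ⟨hlyn y (List.mem_cons_of_mem _ hy), hle_w1 y hy⟩) hu
        rwa [← hw_eq] at this
      refine ⟨?_, by rw [hdrop]; exact hlt⟩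
      -- the pattern occurs at position `w₁.length`
      cases f' with
      | nil => simp at hu
      | cons w₂ g =>
        have hw2lyn : IsLyndon w₂ := hlyn w₂ (List.mem_cons_of_mem _ (List.mem_cons_self))
        have hw2ne : w₂ ≠ [] := hw2lyn.1
        have hw2le : w₂ ≤ w₁ := hle_w1 w₂ (List.mem_cons_self)
        -- w₂ is not all-c̄
        have hnotall : ¬ ∀ b ∈ w₂, b = cbar := by
          intro hall
          have hrep : w₂ = List.replicate w₂.length cbar := List.eq_replicate_of_mem hall
          have hlen1 : w₂.length = 1 := by
            rcases Nat.lt_or_ge w₂.length 2 with h2 | h2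
            · have := List.length_pos_iff.2 hw2ne; omega
            · exact absurd (hrep ▸ hw2lyn) (replicate_not_lyndon h2)
          have hw2c : w₂ = [cbar] := by rw [hrep, hlen1]; rfl
          have hpair2 : List.Pairwise (· ≥ ·) (w₂ :: g) := hpair.of_cons
          have hbotall : ∀ y ∈ (w₂ :: g), y ≠ [] ∧ y ≤ [cbar] := by
            intro y hy
            refine ⟨(hlyn y (List.mem_cons_of_mem _ hy)).1, ?_⟩
            rcases List.mem_cons.1 hy with rfl | hy'
            · rw [hw2c]
            · exact ((List.pairwise_cons.1 hpair2).1 y hy').trans (le_of_eq hw2c)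
          have hrep2 : (w₂ :: g).flatten = List.replicate (w₂ :: g).length cbar :=
            flatten_eq_replicate_of_bot hcbar _ hbotall
          have e1 : w.getLast? = (w₂ :: g).flatten.getLast? := by
            conv_lhs => rw [hw_eq]
            exact List.getLast?_append_of_ne_nil w₁ hu
          rw [List.getLast?_eq_getLast hw, List.getLast?_eq_getLast hu] at e1
          have hlw : w.getLast hw ∈ (w₂ :: g).flatten :=
            (Option.some.inj e1) ▸ List.getLast_mem hu
          exact hlast (List.eq_of_mem_replicate (by rw [← hrep2]; exact hlw))
        push_neg at hnotall
        obtain ⟨b0, hb0mem, hb0ne⟩ := hnotall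
        obtain ⟨i0, hi0, hb0⟩ := List.mem_iff_getElem.1 hb0mem
        have hex : ∃ i, i < w₂.length ∧ w₂.getD i cbar ≠ cbar :=
          ⟨i0, hi0, by rw [List.getD_eq_getElem _ _ hi0, hb0]; exact hb0ne⟩
        set j := Nat.find hex with hjdef
        have hjlt : j < w₂.length := (Nat.find_spec hex).1
        have hjne : w₂[j]'hjlt ≠ cbar := by
          have := (Nat.find_spec hex).2
          rwa [List.getD_eq_getElem _ _ hjlt] at this
        have hjmin : ∀ i, i < j → ∀ (hiw : i < w₂.length), w₂[i]'hiw = cbar := by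
          intro i hij hiw
          have := Nat.find_min hex hij
          push_neg at this
          rw [← List.getD_eq_getElem _ cbar hiw]
          exact this hiw
        have htk2 : ∀ m, m ≤ j → w₂.take m = List.replicate m cbar := by
          intro m hm
          apply List.ext_getElem (by simp; omega)
          intro i h1 h2
          have hir : i < m := by simpa using h2
          simp only [List.getElem_take, List.getElem_replicate]
          exact hjmin i (by omega) (by omega)
        -- r ≤ j
        have hrj : r ≤ j := by
          by_contra hcon
          push_neg at hcon
          have ht1 : w₁.take j = List.replicate j cbar := by
            have e : w₁.take j = (w₁.take r).take j := by
              rw [List.take_take, Nat.min_eq_left (by omega)]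
            rw [e, htakew1, List.take_replicate, Nat.min_eq_left (by omega)]
          have hjw1 : j < w₁.length := by omega
          have hdlt : DLT w₁ w₂ := by
            refine ⟨j, hjw1, hjlt, by rw [ht1, htk2 j le_rfl], ?_⟩
            have hv1 : w₁[j]'hjw1 = cbar := by
              rw [hw1pre.getElem hjw1, ← List.getD_eq_getElem w cbar (by omega)]
              exact hrmin j (by omega)
            rw [hv1]
            exact lt_of_le_of_ne (hcbar _) (Ne.symm hjne)
          exact absurd (lt_of_dlt hdlt) (not_lt.2 hw2le)
        have hrlt2 : r < w₂.length := by omega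
        have htakew2 : w₂.take r = List.replicate r cbar := htk2 r hrj
        refine ⟨w₂[r]'hrlt2, ?_, ?_⟩
        · -- w₂[r] ≤ d
          by_contra hcon
          push_neg at hcon
          have hdlt : DLT w₁ w₂ :=
            ⟨r, hrw1, hrlt2, htakew1.trans htakew2.symm, by rw [hw1r]; exact hcon⟩
          exact absurd (lt_of_dlt hdlt) (not_lt.2 hw2le)
        · have hpat : List.replicate r cbar ++ [w₂[r]'hrlt2] = w₂.take (r + 1) := by
            rw [List.take_succ, ← htakew2, List.getElem?_eq_getElem hrlt2]
            rfl
          rw [hdrop, hpat, List.flatten_cons]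
          exact (List.take_prefix _ _).trans (List.prefix_append _ _)
  · -- lower bound
    apply le_csInf ⟨w.length, Or.inr rfl⟩
    rintro s hs
    rcases hs with ⟨hpat, hlt⟩ | hs
    · by_contra hcon
      push_neg at hcon
      rcases Nat.eq_zero_or_pos s with rfl | hspos
      · rw [List.drop_zero] at hlt
        exact lt_irrefl _ hlt
      · have hdlt : DLT w₁ (w₁.drop s) := lyndon_dlt_drop hw1lyn hspos hcon
        have hgt : w < w.drop s := by
          rw [hw_eq, List.drop_append_of_le_length hcon.le]
          exact dlt_lt_append hdlt _ _
        exact absurd hlt (lt_asymm hgt)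
    · have : s = w.length := hs
      omega
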